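/- Under the same setup, with W† = W(WᵀW)^{-1} and Ŵ† = Ŵ(ŴᵀŴ)^{-1}, and W = Ŵ A D^{-1/2} Aᵀ so that W† = Ŵ† A D^{1/2} Aᵀ, one has ‖W† − Ŵ†‖₂ ≤ ‖Ŵ†‖₂ ‖I − D‖₂ ≤ (2√σ_1(M₂)/σ_K(M₂)) ‖M₂ − M̂₂‖₂ (assuming ‖M₂ − M̂₂‖₂ ≤ σ_K(M₂)/2). -/

import Mathlib

open Matrix Finset
set_option linter.unusedSectionVars false

noncomputable def opNorm {m n : Type*} [Fintype m] [Fintype n] [DecidableEq n]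
    (A : Matrix m n ℝ) : ℝ :=
  ‖(Matrix.toEuclideanLin A).toContinuousLinearMap‖

namespace S13

noncomputable def EV {n : Type*} [Fintype n] (v : n → ℝ) : EuclideanSpace ℝ n :=
  (WithLp.equiv 2 _).symm v

variable {l m n : Type*} [Fintype l] [Fintype m] [Fintype n]
  [DecidableEq l] [DecidableEq m] [DecidableEq n]

lemma dot_self_nonneg (v : n → ℝ) : 0 ≤ v ⬝ᵥ v :=
  Finset.sum_nonneg fun _ _ => mul_self_nonneg _

lemma norm_EV (v : n → ℝ) : ‖EV v‖ = Real.sqrt (v ⬝ᵥ v) := by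
  rw [EuclideanSpace.norm_eq]
  congr 1
  simp [EV, dotProduct, Real.norm_eq_abs, sq_abs, pow_two]

lemma T_apply (A : Matrix m n ℝ) (v : n → ℝ) :
    (Matrix.toEuclideanLin A).toContinuousLinearMap (EV v) = EV (A *ᵥ v) := by
  simp [EV]

lemma norm_mulVec_le (A : Matrix m n ℝ) (v : n → ℝ) :
    ‖EV (A *ᵥ v)‖ ≤ opNorm A * ‖EV v‖ := by
  rw [← T_apply]
  exact ContinuousLinearMap.le_opNorm _ _

lemma opNorm_nonneg (A : Matrix m n ℝ) : 0 ≤ opNorm A := norm_nonneg _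

lemma opNorm_le (A : Matrix m n ℝ) {c : ℝ} (hc : 0 ≤ c)
    (h : ∀ v : n → ℝ, ‖EV (A *ᵥ v)‖ ≤ c * ‖EV v‖) : opNorm A ≤ c := by
  refine ContinuousLinearMap.opNorm_le_bound _ hc fun x => ?_
  have hx : EV ((WithLp.equiv 2 _) x) = x := (WithLp.equiv 2 _).symm_apply_apply x
  have h2 := h ((WithLp.equiv 2 _) x)
  rw [← T_apply, hx] at h2
  exact h2

lemma opNorm_mul_le (A : Matrix m n ℝ) (B : Matrix n l ℝ) :
    opNorm (A * B) ≤ opNorm A * opNorm B := by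
  refine opNorm_le _ (mul_nonneg (opNorm_nonneg _) (opNorm_nonneg _)) fun v => ?_
  rw [← mulVec_mulVec]
  calc ‖EV (A *ᵥ (B *ᵥ v))‖ ≤ opNorm A * ‖EV (B *ᵥ v)‖ := norm_mulVec_le _ _
    _ ≤ opNorm A * (opNorm B * ‖EV v‖) :=
        mul_le_mul_of_nonneg_left (norm_mulVec_le _ _) (opNorm_nonneg _)
    _ = opNorm A * opNorm B * ‖EV v‖ := by ring

lemma dot_transpose (A : Matrix m n ℝ) (v : n → ℝ) (w : m → ℝ) :
    v ⬝ᵥ (Aᵀ *ᵥ w) = (A *ᵥ v) ⬝ᵥ w := by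
  rw [dotProduct_mulVec, vecMul_transpose]

lemma inner_EV (v w : n → ℝ) : (inner ℝ (EV v) (EV w) : ℝ) = v ⬝ᵥ w := by
  simp [EV, PiLp.inner_apply, dotProduct, mul_comm]

lemma quadform_le (B : Matrix n n ℝ) (v : n → ℝ) :
    v ⬝ᵥ (B *ᵥ v) ≤ opNorm B * (v ⬝ᵥ v) := by
  have h1 : v ⬝ᵥ (B *ᵥ v) = inner ℝ (EV v) (EV (B *ᵥ v)) := (inner_EV _ _).symm
  have h2 : (inner ℝ (EV v) (EV (B *ᵥ v)) : ℝ) ≤ ‖EV v‖ * ‖EV (B *ᵥ v)‖ := real_inner_le_norm _ _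
  have h3 := norm_mulVec_le B v
  have h4 : ‖EV v‖ ^ 2 = v ⬝ᵥ v := by rw [norm_EV, Real.sq_sqrt (dot_self_nonneg v)]
  nlinarith [norm_nonneg (EV v), opNorm_nonneg B,
    mul_le_mul_of_nonneg_left h3 (norm_nonneg (EV v))]

lemma isom_dot (A : Matrix m n ℝ) (h : Aᵀ * A = 1) (v : n → ℝ) :
    (A *ᵥ v) ⬝ᵥ (A *ᵥ v) = v ⬝ᵥ v := by
  rw [← dot_transpose, mulVec_mulVec, h, one_mulVec]

lemma opNorm_le_one_of_orth (A : Matrix m n ℝ) (h : Aᵀ * A = 1) : opNorm A ≤ 1 := by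
  refine opNorm_le _ zero_le_one fun v => ?_
  rw [one_mul, norm_EV, norm_EV, isom_dot A h]

lemma opNorm_projection (A : Matrix m n ℝ) (h : Aᵀ * A = 1) : opNorm (A * Aᵀ) ≤ 1 := by
  refine opNorm_le _ zero_le_one fun v => ?_
  rw [one_mul]
  set w := (A * Aᵀ) *ᵥ v with hw
  have h1 : w = A *ᵥ (Aᵀ *ᵥ v) := by rw [hw, ← mulVec_mulVec]
  have h2 : w ⬝ᵥ w = w ⬝ᵥ v := by
    rw [h1, isom_dot A h, dot_transpose]
  have h3 : ‖EV w‖ ^ 2 ≤ ‖EV w‖ * ‖EV v‖ := by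
    calc ‖EV w‖ ^ 2 = w ⬝ᵥ w := by rw [norm_EV, Real.sq_sqrt (dot_self_nonneg w)]
      _ = w ⬝ᵥ v := h2
      _ = inner ℝ (EV w) (EV v) := (inner_EV _ _).symm
      _ ≤ ‖EV w‖ * ‖EV v‖ := real_inner_le_norm _ _
  nlinarith [norm_nonneg (EV w), norm_nonneg (EV v)]

lemma opNorm_diagonal_le {c : n → ℝ} {b : ℝ} (hb : 0 ≤ b) (h : ∀ i, |c i| ≤ b) :
    opNorm (Matrix.diagonal c) ≤ b := by
  refine opNorm_le _ hb fun v => ?_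
  rw [norm_EV, norm_EV]
  have h1 : (Matrix.diagonal c *ᵥ v) ⬝ᵥ (Matrix.diagonal c *ᵥ v) ≤ (b * b) * (v ⬝ᵥ v) := by
    simp only [dotProduct, mulVec_diagonal]
    rw [Finset.mul_sum]
    refine Finset.sum_le_sum fun i _ => ?_
    have h2 : c i * c i ≤ b * b := by
      rw [← abs_mul_abs_self (c i)]
      exact mul_self_le_mul_self (abs_nonneg _) (h i)
    nlinarith [mul_self_nonneg (v i)]
  calc Real.sqrt ((Matrix.diagonal c *ᵥ v) ⬝ᵥ (Matrix.diagonal c *ᵥ v))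
      ≤ Real.sqrt ((b * b) * (v ⬝ᵥ v)) := Real.sqrt_le_sqrt h1
    _ = b * Real.sqrt (v ⬝ᵥ v) := by
        rw [Real.sqrt_mul (mul_self_nonneg b), Real.sqrt_mul_self hb]

lemma abs_le_opNorm_diagonal (c : n → ℝ) (i : n) : |c i| ≤ opNorm (Matrix.diagonal c) := by
  have h := norm_mulVec_le (Matrix.diagonal c) (Pi.single i 1)
  rw [diagonal_mulVec_single, norm_EV, norm_EV] at h
  have e1 : Pi.single i (c i * 1) ⬝ᵥ Pi.single i (c i * 1) = c i * c i := by
    rw [single_dotProduct]; simp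
  have e2 : (Pi.single i 1 : n → ℝ) ⬝ᵥ Pi.single i 1 = 1 := by
    rw [single_dotProduct]; simp
  rw [e1, e2, Real.sqrt_mul_self_eq_abs, Real.sqrt_one, mul_one] at h
  exact h

lemma sum_ext {D K : ℕ} (hKD : K ≤ D) (g : Fin D → ℝ)
    (hg : ∀ i : Fin D, K ≤ (i : ℕ) → g i = 0) :
    ∑ i, g i = ∑ k : Fin K, g (Fin.castLE hKD k) := by
  symm
  have : ∑ k : Fin K, g (Fin.castLE hKD k) = ∑ i ∈ Finset.univ.map (Fin.castLEEmb hKD), g i := by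
    rw [Finset.sum_map]
    rfl
  rw [this]
  apply Finset.sum_subset (Finset.subset_univ _)
  intro i _ hi
  apply hg
  by_contra hlt
  push_neg at hlt
  exact hi (Finset.mem_map.mpr ⟨⟨(i : ℕ), hlt⟩, Finset.mem_univ _, by
    simp [Fin.castLEEmb, Fin.castLE]⟩)

lemma conj_submatrix {D K : ℕ} (B M : Matrix (Fin D) (Fin D) ℝ) (f : Fin K → Fin D) :
    (B.submatrix id f)ᵀ * M * B.submatrix id f = (Bᵀ * M * B).submatrix f f := by
  ext k l
  simp [Matrix.mul_apply, Finset.sum_mul, Finset.mul_sum]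

end S13
namespace S13

lemma weyl_lower (Dn Kn : ℕ) (hK : 0 < Kn) (hKD : Kn ≤ Dn)
    (M N : Matrix (Fin Dn) (Fin Dn) ℝ)
    (σ : Fin Dn → ℝ) (Q : Matrix (Fin Dn) (Fin Dn) ℝ) (hQ : Qᵀ * Q = 1) (hsort : Antitone σ)
    (hdec : M = Q * Matrix.diagonal σ * Qᵀ)
    (σ' : Fin Dn → ℝ) (Q' : Matrix (Fin Dn) (Fin Dn) ℝ) (hQ' : Q'ᵀ * Q' = 1)
    (hsort' : Antitone σ')
    (hdec' : N = Q' * Matrix.diagonal σ' * Q'ᵀ) :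
    σ ⟨Kn - 1, Nat.lt_of_lt_of_le (Nat.sub_lt hK Nat.one_pos) hKD⟩ - opNorm (M - N) ≤ σ' ⟨Kn - 1, Nat.lt_of_lt_of_le (Nat.sub_lt hK Nat.one_pos) hKD⟩ := by
  have hK1 : Kn - 1 < Kn := by omega
  have hK1D : Kn - 1 ≤ Dn := by omega
  set ε := opNorm (M - N) with hεdef
  -- a nonzero vector in the kernel of the (K-1) × K constraint matrix
  set C : Matrix (Fin (Kn - 1)) (Fin Kn) ℝ :=
    Matrix.of (fun j k => (Q'ᵀ * Q) (Fin.castLE hK1D j) (Fin.castLE hKD k)) with hC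
  have hninj : ¬ Function.Injective C.mulVecLin := by
    intro hinj
    have hle := LinearMap.finrank_le_finrank_of_injective hinj
    rw [Module.finrank_fin_fun, Module.finrank_fin_fun] at hle
    omega
  obtain ⟨u1, u2, he, hne⟩ := Function.not_injective_iff.mp hninj
  set u := u1 - u2 with hu
  have hu0 : u ≠ 0 := sub_ne_zero.mpr hne
  have hCu : C *ᵥ u = 0 := by
    have h1 : C.mulVecLin u = 0 := by rw [hu, map_sub, he, sub_self]
    simpa using h1
  -- extend u by zero and map through Q
  set xe : Fin Dn → ℝ := (fun i => if h : (i : ℕ) < Kn then u ⟨(i : ℕ), h⟩ else 0) with hxe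
  have hxe0 : ∀ i : Fin Dn, Kn ≤ (i : ℕ) → xe i = 0 := fun i hi => dif_neg (by omega)
  have hxeK : ∀ k : Fin Kn, xe (Fin.castLE hKD k) = u k := by
    intro k
    simp only [hxe]
    rw [dif_pos (show ((Fin.castLE hKD k : Fin Dn) : ℕ) < Kn from k.isLt)]
    exact congrArg u (Fin.ext rfl)
  set x := Q *ᵥ xe with hx
  have hudot : 0 < u ⬝ᵥ u := by
    rcases Function.ne_iff.mp hu0 with ⟨k, hk⟩
    have hp : 0 < u k * u k := mul_self_pos.mpr hk
    simp only [dotProduct]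
    exact Finset.sum_pos' (fun i _ => mul_self_nonneg _) ⟨k, Finset.mem_univ _, hp⟩
  have hxexe : xe ⬝ᵥ xe = u ⬝ᵥ u := by
    simp only [dotProduct]
    rw [sum_ext hKD (fun i => xe i * xe i) (fun i hi => by simp only [hxe0 i hi]; ring)]
    exact Finset.sum_congr rfl fun k _ => by rw [hxeK]
  have horth : ∀ (R : Matrix (Fin Dn) (Fin Dn) ℝ), Rᵀ * R = 1 → ∀ a b : Fin Dn → ℝ,
      (R *ᵥ a) ⬝ᵥ (R *ᵥ b) = a ⬝ᵥ b := by
    intro R hR a b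
    rw [← dot_transpose, mulVec_mulVec, hR, one_mulVec]
  have hxx : x ⬝ᵥ x = u ⬝ᵥ u := by rw [hx, horth Q hQ, hxexe]
  have hQtx : Qᵀ *ᵥ x = xe := by rw [hx, mulVec_mulVec, hQ, one_mulVec]
  -- quadratic form of M
  have hMx : x ⬝ᵥ (M *ᵥ x) = ∑ k : Fin Kn, σ (Fin.castLE hKD k) * (u k * u k) := by
    rw [hdec]
    have h1 : (Q * Matrix.diagonal σ * Qᵀ) *ᵥ x = Q *ᵥ (Matrix.diagonal σ *ᵥ xe) := by
      rw [← mulVec_mulVec, ← mulVec_mulVec, hQtx]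
    rw [h1, hx, horth Q hQ]
    simp only [dotProduct, mulVec_diagonal]
    rw [sum_ext hKD (fun i => xe i * (σ i * xe i)) (fun i hi => by simp only [hxe0 i hi]; ring)]
    exact Finset.sum_congr rfl fun k _ => by rw [hxeK]; ring
  have hMlow : σ ⟨Kn - 1, by omega⟩ * (u ⬝ᵥ u) ≤ x ⬝ᵥ (M *ᵥ x) := by
    rw [hMx, dotProduct, Finset.mul_sum]
    refine Finset.sum_le_sum fun k _ => ?_
    have hσk : σ ⟨Kn - 1, by omega⟩ ≤ σ (Fin.castLE hKD k) := by
      apply hsort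
      rw [Fin.le_def]
      simp only [Fin.coe_castLE]
      omega
    exact mul_le_mul_of_nonneg_right hσk (mul_self_nonneg _)
  -- quadratic form of N
  set z := Q'ᵀ *ᵥ x with hz
  have hzz : z ⬝ᵥ z = u ⬝ᵥ u := by
    rw [hz, horth Q'ᵀ (by rw [Matrix.transpose_transpose]; exact mul_eq_one_comm.mp hQ') x x, hxx]
  have hz0 : ∀ j : Fin Dn, (j : ℕ) < Kn - 1 → z j = 0 := by
    intro j hj
    have h1 : z j = (C *ᵥ u) ⟨(j : ℕ), hj⟩ := by
      rw [hz, hx, mulVec_mulVec]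
      simp only [Matrix.mulVec, dotProduct, hC, Matrix.of_apply]
      rw [sum_ext hKD (fun i => (Q'ᵀ * Q) j i * xe i)
        (fun i hi => by simp only [hxe0 i hi]; ring)]
      refine Finset.sum_congr rfl fun k _ => ?_
      rw [hxeK]
      congr 1
    rw [h1, hCu]
    rfl
  have hNx : x ⬝ᵥ (N *ᵥ x) ≤ σ' ⟨Kn - 1, by omega⟩ * (u ⬝ᵥ u) := by
    rw [hdec']
    have h1 : (Q' * Matrix.diagonal σ' * Q'ᵀ) *ᵥ x = Q' *ᵥ (Matrix.diagonal σ' *ᵥ z) := by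
      rw [← mulVec_mulVec, ← mulVec_mulVec, ← hz]
    have h2 : x ⬝ᵥ (Q' *ᵥ (Matrix.diagonal σ' *ᵥ z)) = z ⬝ᵥ (Matrix.diagonal σ' *ᵥ z) := by
      conv_lhs => rw [← Matrix.transpose_transpose Q', dot_transpose]
    rw [h1, h2]
    calc z ⬝ᵥ (Matrix.diagonal σ' *ᵥ z) = ∑ j, σ' j * (z j * z j) := by
          simp only [dotProduct, mulVec_diagonal]
          exact Finset.sum_congr rfl fun j _ => by ring
      _ ≤ ∑ j, σ' ⟨Kn - 1, by omega⟩ * (z j * z j) := by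
          refine Finset.sum_le_sum fun j _ => ?_
          rcases lt_or_ge (j : ℕ) (Kn - 1) with hj | hj
          · rw [hz0 j hj]; simp
          · refine mul_le_mul_of_nonneg_right (hsort' ?_) (mul_self_nonneg _)
            rw [Fin.le_def]
            exact hj
      _ = σ' ⟨Kn - 1, by omega⟩ * (z ⬝ᵥ z) := by
          simp [dotProduct, Finset.mul_sum]
      _ = σ' ⟨Kn - 1, by omega⟩ * (u ⬝ᵥ u) := by rw [hzz]
  -- perturbation bound
  have hpert : x ⬝ᵥ (M *ᵥ x) - x ⬝ᵥ (N *ᵥ x) ≤ ε * (u ⬝ᵥ u) := by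
    have h := quadform_le (M - N) x
    rw [Matrix.sub_mulVec, dotProduct_sub, hxx] at h
    exact h
  nlinarith [hMlow, hNx, hpert, hudot]

end S13
set_option maxHeartbeats 1000000 in
/-- under the same setup, with `W† = W(WᵀW)⁻¹`, `Ŵ† = Ŵ(ŴᵀŴ)⁻¹`,
and `W† = Ŵ† A D^{1/2} Aᵀ`, one has
`‖W† - Ŵ†‖₂ ≤ ‖Ŵ†‖₂ ‖I - D‖₂ ≤ (2√σ₁(M₂)/σ_K(M₂)) ‖M₂ - M̂₂‖₂`. -/
theorem stmt13 (D K : ℕ) (hK : 0 < K) (hKD : K ≤ D)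
    (M₂ N₂ : Matrix (Fin D) (Fin D) ℝ) (h1 : M₂.PosSemidef) (h2 : N₂.PosSemidef)
    (σ : Fin D → ℝ) (Q : Matrix (Fin D) (Fin D) ℝ)
    (hQ : Qᵀ * Q = 1) (hsort : Antitone σ)
    (hdec : M₂ = Q * Matrix.diagonal σ * Qᵀ)
    (σ' : Fin D → ℝ) (Q' : Matrix (Fin D) (Fin D) ℝ)
    (hQ' : Q'ᵀ * Q' = 1) (hsort' : Antitone σ')
    (hdec' : N₂ = Q' * Matrix.diagonal σ' * Q'ᵀ)
    (hσK : 0 < σ ⟨K - 1, by omega⟩)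
    (hε : opNorm (M₂ - N₂) ≤ σ ⟨K - 1, by omega⟩ / 2)
    (U' : Matrix (Fin D) (Fin K) ℝ)
    (hU' : U' = Q'.submatrix id (Fin.castLE hKD))
    (W' : Matrix (Fin D) (Fin K) ℝ)
    (hW' : W' = U' * Matrix.diagonal (fun k => (Real.sqrt (σ' (Fin.castLE hKD k)))⁻¹))
    (hwhiten : W'ᵀ * N₂ * W' = 1)
    (A : Matrix (Fin K) (Fin K) ℝ) (hA : Aᵀ * A = 1)
    (d : Fin K → ℝ) (hd : ∀ k, 0 < d k)
    (hAD : W'ᵀ * M₂ * W' = A * Matrix.diagonal d * Aᵀ)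
    (W : Matrix (Fin D) (Fin K) ℝ)
    (hWdef : W = W' * A * Matrix.diagonal (fun k => (Real.sqrt (d k))⁻¹) * Aᵀ)
    (Wdag W'dag : Matrix (Fin D) (Fin K) ℝ)
    (hWdag : Wdag = W * (Wᵀ * W)⁻¹)
    (hW'dag : W'dag = W' * (W'ᵀ * W')⁻¹)
    (hrel : Wdag = W'dag * A * Matrix.diagonal (fun k => Real.sqrt (d k)) * Aᵀ) :
    opNorm (Wdag - W'dag)
        ≤ opNorm W'dag * opNorm ((1 : Matrix (Fin K) (Fin K) ℝ) - Matrix.diagonal d) ∧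
    opNorm (Wdag - W'dag)
        ≤ (2 * Real.sqrt (σ ⟨0, by omega⟩) / σ ⟨K - 1, by omega⟩) * opNorm (M₂ - N₂) := by
  classical
  have hεnn : 0 ≤ opNorm (M₂ - N₂) := S13.opNorm_nonneg _
  have hAA : A * Aᵀ = 1 := mul_eq_one_comm.mp hA
  -- factorization (I)
  have hsub : Matrix.diagonal (fun k => Real.sqrt (d k)) - 1
      = Matrix.diagonal (fun k => Real.sqrt (d k) - 1) := by
    rw [← Matrix.diagonal_one, Matrix.diagonal_sub]
  have hfac1 : Wdag - W'dag
      = W'dag * A * Matrix.diagonal (fun k => Real.sqrt (d k) - 1) * Aᵀ := by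
    calc Wdag - W'dag
        = W'dag * A * Matrix.diagonal (fun k => Real.sqrt (d k)) * Aᵀ - W'dag := by rw [hrel]
      _ = W'dag * A * (Matrix.diagonal (fun k => Real.sqrt (d k)) - 1) * Aᵀ := by
          rw [Matrix.mul_sub, Matrix.mul_one, Matrix.sub_mul,
            Matrix.mul_assoc W'dag A Aᵀ, hAA, Matrix.mul_one]
      _ = W'dag * A * Matrix.diagonal (fun k => Real.sqrt (d k) - 1) * Aᵀ := by rw [hsub]
  -- part 1
  have hnA : opNorm A ≤ 1 := S13.opNorm_le_one_of_orth A hA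
  have hnAT : opNorm Aᵀ ≤ 1 := S13.opNorm_le_one_of_orth Aᵀ
    (by rw [Matrix.transpose_transpose]; exact hAA)
  have h1mD : (1 : Matrix (Fin K) (Fin K) ℝ) - Matrix.diagonal d
      = Matrix.diagonal (fun k => 1 - d k) := by
    rw [← Matrix.diagonal_one, Matrix.diagonal_sub]
  have habs : ∀ a : ℝ, 0 ≤ a → |Real.sqrt a - 1| ≤ |1 - a| := by
    intro a ha
    have hs := Real.mul_self_sqrt ha
    have h1 : 1 - a = -((Real.sqrt a - 1) * (Real.sqrt a + 1)) := by linear_combination hs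
    calc |Real.sqrt a - 1| ≤ |Real.sqrt a - 1| * (Real.sqrt a + 1) := by
          nlinarith [abs_nonneg (Real.sqrt a - 1), Real.sqrt_nonneg a]
      _ = |(Real.sqrt a - 1) * (Real.sqrt a + 1)| := by
          rw [abs_mul, abs_of_nonneg (by positivity : (0:ℝ) ≤ Real.sqrt a + 1)]
      _ = |1 - a| := by rw [h1, abs_neg]
  have hdiagle : opNorm (Matrix.diagonal (fun k => Real.sqrt (d k) - 1))
      ≤ opNorm ((1 : Matrix (Fin K) (Fin K) ℝ) - Matrix.diagonal d) := by
    refine S13.opNorm_diagonal_le (S13.opNorm_nonneg _) fun k => ?_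
    calc |Real.sqrt (d k) - 1| ≤ |1 - d k| := habs (d k) (hd k).le
      _ ≤ opNorm (Matrix.diagonal (fun k => 1 - d k)) :=
          S13.abs_le_opNorm_diagonal (fun k => 1 - d k) k
      _ = opNorm ((1 : Matrix (Fin K) (Fin K) ℝ) - Matrix.diagonal d) := by rw [h1mD]
  have part1 : opNorm (Wdag - W'dag)
      ≤ opNorm W'dag * opNorm ((1 : Matrix (Fin K) (Fin K) ℝ) - Matrix.diagonal d) := by
    rw [hfac1]
    have n1 := S13.opNorm_nonneg W'dag
    have n3 := S13.opNorm_nonneg (Matrix.diagonal (fun k => Real.sqrt (d k) - 1))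
    have n4 := S13.opNorm_nonneg (W'dag * A * Matrix.diagonal (fun k => Real.sqrt (d k) - 1))
    calc opNorm (W'dag * A * Matrix.diagonal (fun k => Real.sqrt (d k) - 1) * Aᵀ)
        ≤ opNorm (W'dag * A * Matrix.diagonal (fun k => Real.sqrt (d k) - 1)) * opNorm Aᵀ :=
          S13.opNorm_mul_le _ _
      _ ≤ opNorm (W'dag * A * Matrix.diagonal (fun k => Real.sqrt (d k) - 1)) * 1 :=
          mul_le_mul_of_nonneg_left hnAT n4
      _ = opNorm (W'dag * A * Matrix.diagonal (fun k => Real.sqrt (d k) - 1)) := mul_one _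
      _ ≤ opNorm (W'dag * A) * opNorm (Matrix.diagonal (fun k => Real.sqrt (d k) - 1)) :=
          S13.opNorm_mul_le _ _
      _ ≤ (opNorm W'dag * opNorm A) * opNorm (Matrix.diagonal (fun k => Real.sqrt (d k) - 1)) :=
          mul_le_mul_of_nonneg_right (S13.opNorm_mul_le _ _) n3
      _ ≤ (opNorm W'dag * 1) * opNorm ((1 : Matrix (Fin K) (Fin K) ℝ) - Matrix.diagonal d) := by
          apply mul_le_mul (mul_le_mul_of_nonneg_left hnA n1) hdiagle n3
            (mul_nonneg n1 zero_le_one)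
      _ = opNorm W'dag * opNorm ((1 : Matrix (Fin K) (Fin K) ℝ) - Matrix.diagonal d) := by
          rw [mul_one]
  refine ⟨part1, ?_⟩
  -- ================= part 2 =====================
  set f : Fin K → Fin D := Fin.castLE hKD with hf
  have hfinj : Function.Injective f := Fin.castLE_injective hKD
  have hconj : ∀ M : Matrix (Fin D) (Fin D) ℝ,
      U'ᵀ * M * U' = (Q'ᵀ * M * Q').submatrix f f := by
    intro M
    rw [hU']
    exact S13.conj_submatrix Q' M f
  have hU'U' : U'ᵀ * U' = 1 := by
    have h := hconj 1
    rw [Matrix.mul_one, Matrix.mul_one] at h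
    rw [h, hQ', Matrix.submatrix_one f hfinj]
  have hQ'N : Q'ᵀ * N₂ * Q' = Matrix.diagonal σ' := by
    rw [hdec']
    have h : Q'ᵀ * (Q' * Matrix.diagonal σ' * Q'ᵀ) * Q'
        = Q'ᵀ * Q' * Matrix.diagonal σ' * (Q'ᵀ * Q') := by
      simp only [Matrix.mul_assoc]
    rw [h, hQ', Matrix.one_mul, Matrix.mul_one]
  have hU'N : U'ᵀ * N₂ * U' = Matrix.diagonal (fun k => σ' (f k)) := by
    rw [hconj N₂, hQ'N, Matrix.submatrix_diagonal σ' f hfinj]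
    rfl
  have hW'N : W'ᵀ * N₂ * W'
      = Matrix.diagonal (fun k => (Real.sqrt (σ' (f k)))⁻¹ * σ' (f k) * (Real.sqrt (σ' (f k)))⁻¹) := by
    rw [hW', Matrix.transpose_mul, Matrix.diagonal_transpose]
    have h : Matrix.diagonal (fun k => (Real.sqrt (σ' (f k)))⁻¹) * U'ᵀ * N₂
          * (U' * Matrix.diagonal (fun k => (Real.sqrt (σ' (f k)))⁻¹))
        = Matrix.diagonal (fun k => (Real.sqrt (σ' (f k)))⁻¹) * (U'ᵀ * N₂ * U')
          * Matrix.diagonal (fun k => (Real.sqrt (σ' (f k)))⁻¹) := by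
      simp only [Matrix.mul_assoc]
    rw [h, hU'N, Matrix.diagonal_mul_diagonal, Matrix.diagonal_mul_diagonal]
  have hσ'pos : ∀ k : Fin K, 0 < σ' (f k) := by
    intro k
    have hgk : (Real.sqrt (σ' (f k)))⁻¹ * σ' (f k) * (Real.sqrt (σ' (f k)))⁻¹ = 1 := by
      have h := hW'N.symm.trans hwhiten
      have h2 := congrArg (fun M => M k k) h
      simpa using h2
    by_contra hle
    push_neg at hle
    rw [Real.sqrt_eq_zero_of_nonpos hle] at hgk
    simp at hgk
  have hW'W' : W'ᵀ * W' = Matrix.diagonal (fun k => (σ' (f k))⁻¹) := by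
    rw [hW', Matrix.transpose_mul, Matrix.diagonal_transpose]
    have h : Matrix.diagonal (fun k => (Real.sqrt (σ' (f k)))⁻¹) * U'ᵀ
          * (U' * Matrix.diagonal (fun k => (Real.sqrt (σ' (f k)))⁻¹))
        = Matrix.diagonal (fun k => (Real.sqrt (σ' (f k)))⁻¹) * (U'ᵀ * U')
          * Matrix.diagonal (fun k => (Real.sqrt (σ' (f k)))⁻¹) := by
      simp only [Matrix.mul_assoc]
    rw [h, hU'U', Matrix.mul_one, Matrix.diagonal_mul_diagonal]
    have h2 : (fun k => (Real.sqrt (σ' (f k)))⁻¹ * (Real.sqrt (σ' (f k)))⁻¹)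
        = fun k => (σ' (f k))⁻¹ := by
      funext k
      rw [← Real.sqrt_inv, Real.mul_self_sqrt (inv_nonneg.mpr (hσ'pos k).le)]
    rw [h2]
  have hinv : (W'ᵀ * W')⁻¹ = Matrix.diagonal (fun k => σ' (f k)) := by
    apply Matrix.inv_eq_right_inv
    rw [hW'W', Matrix.diagonal_mul_diagonal]
    have h : (fun k => (σ' (f k))⁻¹ * σ' (f k)) = fun _ => (1:ℝ) :=
      funext fun k => inv_mul_cancel₀ (hσ'pos k).ne'
    rw [h, Matrix.diagonal_one]
  have hW'dagF : W'dag = U' * Matrix.diagonal (fun k => Real.sqrt (σ' (f k))) := by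
    rw [hW'dag, hinv, hW', Matrix.mul_assoc, Matrix.diagonal_mul_diagonal]
    have h2 : (fun k => (Real.sqrt (σ' (f k)))⁻¹ * σ' (f k))
        = fun k => Real.sqrt (σ' (f k)) := by
      funext k
      have h0 : Real.sqrt (σ' (f k)) ≠ 0 := (Real.sqrt_pos.mpr (hσ'pos k)).ne'
      calc (Real.sqrt (σ' (f k)))⁻¹ * σ' (f k)
          = (Real.sqrt (σ' (f k)))⁻¹ * (Real.sqrt (σ' (f k)) * Real.sqrt (σ' (f k))) := by
            rw [Real.mul_self_sqrt (hσ'pos k).le]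
        _ = Real.sqrt (σ' (f k)) := by
            rw [← mul_assoc, inv_mul_cancel₀ h0, one_mul]
    rw [h2]
  have hP : W'dag * W'ᵀ = U' * U'ᵀ := by
    rw [hW'dagF, hW', Matrix.transpose_mul, Matrix.diagonal_transpose]
    have h : U' * Matrix.diagonal (fun k => Real.sqrt (σ' (f k)))
          * (Matrix.diagonal (fun k => (Real.sqrt (σ' (f k)))⁻¹) * U'ᵀ)
        = U' * (Matrix.diagonal (fun k => Real.sqrt (σ' (f k)))
          * Matrix.diagonal (fun k => (Real.sqrt (σ' (f k)))⁻¹)) * U'ᵀ := by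
      simp only [Matrix.mul_assoc]
    rw [h, Matrix.diagonal_mul_diagonal]
    have h2 : (fun k => Real.sqrt (σ' (f k)) * (Real.sqrt (σ' (f k)))⁻¹) = fun _ => (1:ℝ) :=
      funext fun k => mul_inv_cancel₀ (Real.sqrt_pos.mpr (hσ'pos k)).ne'
    rw [h2, Matrix.diagonal_one, Matrix.mul_one]
  -- factorization (II)
  set G : Matrix (Fin K) (Fin K) ℝ :=
    Matrix.diagonal (fun k => (Real.sqrt (d k) + 1)⁻¹) with hG
  have hADA : A * Matrix.diagonal (fun k => d k - 1) * Aᵀ = W'ᵀ * (M₂ - N₂) * W' := by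
    have hd1 : Matrix.diagonal (fun k => d k - 1)
        = Matrix.diagonal d - 1 := by
      rw [← Matrix.diagonal_one, Matrix.diagonal_sub]
    rw [hd1, Matrix.mul_sub, Matrix.mul_one, Matrix.sub_mul, hAA, ← hAD, ← hwhiten,
      Matrix.mul_sub W'ᵀ M₂ N₂, Matrix.sub_mul]
  have hdgfun : (fun k => Real.sqrt (d k) - 1)
      = fun k => (d k - 1) * (Real.sqrt (d k) + 1)⁻¹ := by
    funext k
    have h0 : Real.sqrt (d k) + 1 ≠ 0 := by positivity
    field_simp
    linear_combination Real.mul_self_sqrt (hd k).le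
  have hdg : Matrix.diagonal (fun k => Real.sqrt (d k) - 1)
      = Matrix.diagonal (fun k => d k - 1) * G := by
    rw [hG, Matrix.diagonal_mul_diagonal, hdgfun]
  have hfac2 : Wdag - W'dag = (W'dag * W'ᵀ) * (M₂ - N₂) * (W' * (A * G * Aᵀ)) := by
    rw [hfac1, hdg]
    have hins : W'dag * A * (Matrix.diagonal (fun k => d k - 1) * G) * Aᵀ
        = W'dag * (A * Matrix.diagonal (fun k => d k - 1) * Aᵀ) * (A * G * Aᵀ) := by
      simp only [Matrix.mul_assoc]
      rw [← Matrix.mul_assoc Aᵀ A, hA, Matrix.one_mul]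
    rw [hins, hADA]
    simp only [Matrix.mul_assoc]
  -- norm bounds
  have hnP : opNorm (W'dag * W'ᵀ) ≤ 1 := by
    rw [hP]; exact S13.opNorm_projection U' hU'U'
  have hnU' : opNorm U' ≤ 1 := S13.opNorm_le_one_of_orth U' hU'U'
  have hnG : opNorm G ≤ 1 := by
    rw [hG]
    refine S13.opNorm_diagonal_le zero_le_one fun k => ?_
    rw [abs_of_nonneg (by positivity)]
    rw [inv_le_one₀ (by positivity)]
    nlinarith [Real.sqrt_nonneg (d k)]
  -- index bookkeeping
  have hK1 : K - 1 < K := by omega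
  have hfK1 : f ⟨K - 1, hK1⟩ = ⟨K - 1, by omega⟩ := rfl
  have hσ'Kpos : 0 < σ' ⟨K - 1, by omega⟩ := by
    have := hσ'pos ⟨K - 1, hK1⟩
    rwa [hfK1] at this
  have hnW' : opNorm W' ≤ (Real.sqrt (σ' ⟨K - 1, by omega⟩))⁻¹ := by
    rw [hW']
    have hdiag : opNorm (Matrix.diagonal (fun k => (Real.sqrt (σ' (f k)))⁻¹))
        ≤ (Real.sqrt (σ' ⟨K - 1, by omega⟩))⁻¹ := by
      refine S13.opNorm_diagonal_le (by positivity) fun k => ?_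
      rw [abs_of_nonneg (by positivity)]
      have h1 : σ' ⟨K - 1, by omega⟩ ≤ σ' (f k) := by
        apply hsort'
        rw [Fin.le_def]
        simp only [hf, Fin.coe_castLE]
        omega
      exact inv_anti₀ (Real.sqrt_pos.mpr hσ'Kpos) (Real.sqrt_le_sqrt h1)
    calc opNorm (U' * Matrix.diagonal (fun k => (Real.sqrt (σ' (f k)))⁻¹))
        ≤ opNorm U' * opNorm (Matrix.diagonal (fun k => (Real.sqrt (σ' (f k)))⁻¹)) :=
          S13.opNorm_mul_le _ _
      _ ≤ 1 * (Real.sqrt (σ' ⟨K - 1, by omega⟩))⁻¹ := by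
          apply mul_le_mul hnU' hdiag (S13.opNorm_nonneg _) zero_le_one
      _ = (Real.sqrt (σ' ⟨K - 1, by omega⟩))⁻¹ := one_mul _
  -- chain
  have hnAGA : opNorm (A * G * Aᵀ) ≤ 1 := by
    calc opNorm (A * G * Aᵀ) ≤ opNorm (A * G) * opNorm Aᵀ := S13.opNorm_mul_le _ _
      _ ≤ (opNorm A * opNorm G) * opNorm Aᵀ :=
          mul_le_mul_of_nonneg_right (S13.opNorm_mul_le _ _) (S13.opNorm_nonneg _)
      _ ≤ (1 * 1) * 1 := by
          apply mul_le_mul (mul_le_mul hnA hnG (S13.opNorm_nonneg _) zero_le_one) hnAT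
            (S13.opNorm_nonneg _) (by norm_num)
      _ = 1 := by norm_num
  have hnY : opNorm (W' * (A * G * Aᵀ)) ≤ (Real.sqrt (σ' ⟨K - 1, by omega⟩))⁻¹ := by
    calc opNorm (W' * (A * G * Aᵀ)) ≤ opNorm W' * opNorm (A * G * Aᵀ) := S13.opNorm_mul_le _ _
      _ ≤ (Real.sqrt (σ' ⟨K - 1, by omega⟩))⁻¹ * 1 :=
          mul_le_mul hnW' hnAGA (S13.opNorm_nonneg _) (by positivity)
      _ = (Real.sqrt (σ' ⟨K - 1, by omega⟩))⁻¹ := mul_one _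
  have hchain : opNorm (Wdag - W'dag)
      ≤ opNorm (M₂ - N₂) * (Real.sqrt (σ' ⟨K - 1, by omega⟩))⁻¹ := by
    rw [hfac2]
    have n2 := S13.opNorm_nonneg (W' * (A * G * Aᵀ))
    calc opNorm ((W'dag * W'ᵀ) * (M₂ - N₂) * (W' * (A * G * Aᵀ)))
        ≤ opNorm ((W'dag * W'ᵀ) * (M₂ - N₂)) * opNorm (W' * (A * G * Aᵀ)) :=
          S13.opNorm_mul_le _ _
      _ ≤ (opNorm (W'dag * W'ᵀ) * opNorm (M₂ - N₂)) * opNorm (W' * (A * G * Aᵀ)) :=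
          mul_le_mul_of_nonneg_right (S13.opNorm_mul_le _ _) n2
      _ ≤ (1 * opNorm (M₂ - N₂)) * (Real.sqrt (σ' ⟨K - 1, by omega⟩))⁻¹ :=
          mul_le_mul (mul_le_mul_of_nonneg_right hnP hεnn) hnY n2
            (mul_nonneg zero_le_one hεnn)
      _ = opNorm (M₂ - N₂) * (Real.sqrt (σ' ⟨K - 1, by omega⟩))⁻¹ := by rw [one_mul]
  -- Weyl bound
  have hweyl := S13.weyl_lower D K hK hKD M₂ N₂ σ Q hQ hsort hdec σ' Q' hQ' hsort' hdec'
  have hσ'half : σ ⟨K - 1, by omega⟩ / 2 ≤ σ' ⟨K - 1, by omega⟩ := by linarith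
  -- final numeric estimate
  have hs0 : σ ⟨K - 1, by omega⟩ ≤ σ ⟨0, by omega⟩ := by
    apply hsort
    rw [Fin.le_def]
    simp
  have hfin : (Real.sqrt (σ' ⟨K - 1, by omega⟩))⁻¹
      ≤ 2 * Real.sqrt (σ ⟨0, by omega⟩) / σ ⟨K - 1, by omega⟩ := by
    set s := σ ⟨K - 1, by omega⟩ with hsdef
    set t := σ' ⟨K - 1, by omega⟩ with htdef
    have hb := Real.sqrt_nonneg (σ ⟨0, by omega⟩)
    have hcb : Real.sqrt s ≤ Real.sqrt (σ ⟨0, by omega⟩) := Real.sqrt_le_sqrt hs0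
    have htpos : 0 < t := hσ'Kpos
    have h1 : Real.sqrt (s / 2) ≤ Real.sqrt t := Real.sqrt_le_sqrt hσ'half
    have h2 : (Real.sqrt t)⁻¹ ≤ (Real.sqrt (s / 2))⁻¹ :=
      inv_anti₀ (Real.sqrt_pos.mpr (by linarith)) h1
    refine le_trans h2 ?_
    have ha : 0 < Real.sqrt (s / 2) := Real.sqrt_pos.mpr (by linarith)
    rw [inv_eq_one_div, div_le_div_iff₀ ha hσK]
    have hsq : Real.sqrt (s / 2) * Real.sqrt (s / 2) = s / 2 :=
      Real.mul_self_sqrt (by linarith)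
    have hsq2 : Real.sqrt s * Real.sqrt s = s := Real.mul_self_sqrt hσK.le
    nlinarith [Real.sqrt_nonneg s, Real.sqrt_nonneg (s/2),
      mul_le_mul_of_nonneg_right hcb ha.le,
      sq_nonneg (Real.sqrt s - Real.sqrt (s/2)),
      sq_nonneg (2 * Real.sqrt (s/2) * Real.sqrt s - s)]
  calc opNorm (Wdag - W'dag)
      ≤ opNorm (M₂ - N₂) * (Real.sqrt (σ' ⟨K - 1, by omega⟩))⁻¹ := hchain
    _ ≤ opNorm (M₂ - N₂) * (2 * Real.sqrt (σ ⟨0, by omega⟩) / σ ⟨K - 1, by omega⟩) :=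
        mul_le_mul_of_nonneg_left hfin hεnn
    _ = (2 * Real.sqrt (σ ⟨0, by omega⟩) / σ ⟨K - 1, by omega⟩) * opNorm (M₂ - N₂) :=
        mul_comm _ _
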